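/- Let p : X → Y be a quasi-Galoisian branched covering. Then for every a ∈ Y and â ∈ p⁻¹(a), the orbit Γ(X/Y)·â of the automorphism group is dense in the fiber p⁻¹(a). -/

import Mathlib

/-- A subset `U` of a topological space `X` is *portly* if it is open, dense, and
locally connected in `X`. -/
def Portly (X : Type*) [TopologicalSpace X] (U : Set X) : Prop :=
  IsOpen U ∧ Dense U ∧ ∀ W : Set X, IsOpen W → IsConnected W → IsConnected (W ∩ U)

/-- `V` is a connected component of `S`. -/
def IsComponentOf {X : Type*} [TopologicalSpace X] (V S : Set X) : Prop :=
  ∃ x ∈ S, V = connectedComponentIn S x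

/-- A *spread* is a continuous map such that the connected components of preimages of
open subsets of the base form a basis for the topology of the total space. -/
def IsSpread {X Y : Type*} [TopologicalSpace X] [TopologicalSpace Y] (p : X → Y) : Prop :=
  Continuous p ∧ TopologicalSpace.IsTopologicalBasis
    {V : Set X | ∃ U : Set Y, IsOpen U ∧ IsComponentOf V (p ⁻¹' U)}

/-- `p` maps `V` homeomorphically onto `U`. -/
def MapsHomeomorphicallyOnto {X Y : Type*} [TopologicalSpace X] [TopologicalSpace Y]
    (p : X → Y) (V : Set X) (U : Set Y) : Prop :=
  ∃ h : V ≃ₜ U, ∀ v : V, (h v : Y) = p v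

/-- The ordinary locus in the base of a spread: points admitting an open neighborhood
evenly covered by `p`. -/
def OrdBase {X Y : Type*} [TopologicalSpace X] [TopologicalSpace Y] (p : X → Y) : Set Y :=
  {y | ∃ U : Set Y, IsOpen U ∧ y ∈ U ∧
    ∀ V : Set X, IsComponentOf V (p ⁻¹' U) → MapsHomeomorphicallyOnto p V U}

/-- The ordinary locus in the total space of a spread. -/
def OrdTotal {X Y : Type*} [TopologicalSpace X] [TopologicalSpace Y] (p : X → Y) : Set X :=
  p ⁻¹' OrdBase p

/-- A *complete* spread: every monotone choice of connected components of preimages of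
connected open neighborhoods of a point of the closure of the image has nonempty
intersection. -/
def IsCompleteSpread {X Y : Type*} [TopologicalSpace X] [TopologicalSpace Y]
    (p : X → Y) : Prop :=
  IsSpread p ∧ ∀ y ∈ closure (Set.range p),
    ∀ χ : {U : Set Y // IsOpen U ∧ IsConnected U ∧ y ∈ U} → Set X,
      (∀ U, IsComponentOf (χ U) (p ⁻¹' U.1)) →
      (∀ U V, U.1 ⊆ V.1 → χ U ⊆ χ V) →
      (⋂ U, χ U).Nonempty

/-- A *branched covering* is a complete surjective spread between connected spaces whose
ordinary loci are portly. -/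
def IsBranchedCovering {X Y : Type*} [TopologicalSpace X] [TopologicalSpace Y]
    (p : X → Y) : Prop :=
  IsCompleteSpread p ∧ Function.Surjective p ∧ ConnectedSpace X ∧ ConnectedSpace Y ∧
    Portly X (OrdTotal p) ∧ Portly Y (OrdBase p)

/-- A branched covering is *quasi-Galoisian* if its automorphism group acts transitively
on the connected components of the preimage of every open subset of the base. -/
def QuasiGaloisian {X Y : Type*} [TopologicalSpace X] [TopologicalSpace Y]
    (p : X → Y) : Prop :=
  IsBranchedCovering p ∧ ∀ U : Set Y, IsOpen U → ∀ V W : Set X,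
    IsComponentOf V (p ⁻¹' U) → IsComponentOf W (p ⁻¹' U) →
    ∃ φ : X ≃ₜ X, (∀ z, p (φ z) = p z) ∧ φ '' V = W

theorem stmt15 {X Y : Type*} [TopologicalSpace X] [TopologicalSpace Y]
    [T2Space X] [T2Space Y] [FirstCountableTopology X] [FirstCountableTopology Y]
    [LocallyPathConnectedSpace X] [LocallyPathConnectedSpace Y]
    (p : X → Y) (hp : QuasiGaloisian p) (a : Y) (ahat : X) (haa : p ahat = a) :
    p ⁻¹' {a} ⊆ closure {y : X | ∃ φ : X ≃ₜ X, (∀ z, p (φ z) = p z) ∧ y = φ ahat} := by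
  intro b hb
  have hba : p b = a := hb
  obtain ⟨⟨⟨⟨_, hbasis⟩, _⟩, -⟩, htrans⟩ := hp
  rw [mem_closure_iff]
  intro N hN hbN
  obtain ⟨V, ⟨U, hUopen, hVcomp⟩, hbV, hVN⟩ :=
    hbasis.exists_subset_of_mem_open hbN hN
  -- b ∈ V ⊆ p⁻¹ U, so a ∈ U, so ahat ∈ p⁻¹ U
  have hVsub : V ⊆ p ⁻¹' U := by
    obtain ⟨x, hx, rfl⟩ := hVcomp
    exact connectedComponentIn_subset _ _
  have hahat : ahat ∈ p ⁻¹' U := by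
    have : p b ∈ U := hVsub hbV
    simpa [Set.mem_preimage, haa, ← hba] using this
  have hWcomp : IsComponentOf (connectedComponentIn (p ⁻¹' U) ahat) (p ⁻¹' U) :=
    ⟨ahat, hahat, rfl⟩
  obtain ⟨φ, hφp, hφim⟩ := htrans U hUopen _ V hWcomp hVcomp
  refine ⟨φ ahat, hVN ?_, φ, hφp, rfl⟩
  rw [← hφim]
  exact Set.mem_image_of_mem _ (mem_connectedComponentIn hahat)
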